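/- Suppose (a_n)_{n≥1} are real numbers satisfying the recursion (2+θν₁)a₂ − (2+σ+θ)a₁ + σ = 0 and (n+θν₁)a_n − (n+σ+θ)a_{n-1} + σa_{n-2} = 0 for n ≥ 3, and suppose v(x) := ∑_{n≥1} a_n(1−x)^n converges for x ∈ (0,1) with ψ(x) := x·v(x). Then ψ formally satisfies the ODE x(1−x)ψ''(x) + [(1−x)θν₀ − xθν₁ + (1−x)xσ]ψ'(x) − (θν₁·x/(1−x) + θν₀·(1−x)/x)ψ(x) + σx(1−x) = 0, in the sense that substituting the power series in (1−x) makes all coefficients vanish. -/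

import Mathlib

open Filter Set

private lemma auxBound {c : ℕ → ℝ} {r : ℝ} (h : Summable fun n => c n * r ^ n) :
    ∃ C : ℝ, ∀ n, |c n| * |r| ^ n ≤ C := by
  obtain ⟨C, hC⟩ := (h.tendsto_atTop_zero.abs.bddAbove_range)
  refine ⟨C, fun n => ?_⟩
  have := hC ⟨n, rfl⟩
  simpa [abs_mul, abs_pow] using this

private lemma auxSummable0 {c : ℕ → ℝ}
    (hb : ∀ r ∈ Set.Ioo (0:ℝ) 1, Summable fun n => c n * r ^ n)
    {y : ℝ} (hy : |y| < 1) : Summable fun n => c n * y ^ n := by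
  have h0 : 0 ≤ |y| := abs_nonneg y
  set r : ℝ := (|y| + 1) / 2 with hr
  have hr0 : 0 < r := by rw [hr]; linarith
  have hyr : |y| < r := by rw [hr]; linarith
  have hr1 : r < 1 := by rw [hr]; linarith
  obtain ⟨C, hC⟩ := auxBound (hb r ⟨hr0, hr1⟩)
  set q : ℝ := |y| / r with hq
  have hq1 : q < 1 := (div_lt_one hr0).2 hyr
  have hq0 : 0 ≤ q := by positivity
  have hsum : Summable fun n : ℕ => C * q ^ n :=
    (summable_geometric_of_lt_one hq0 hq1).mul_left C
  refine Summable.of_norm_bounded hsum (fun n => ?_)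
  have h1 : |c n| * r ^ n ≤ C := by
    have := hC n; rwa [abs_of_pos hr0] at this
  have hyq : |y| ^ n = q ^ n * r ^ n := by
    rw [hq, div_pow]; field_simp
  rw [Real.norm_eq_abs, abs_mul, abs_pow, hyq]
  calc |c n| * (q ^ n * r ^ n) = (|c n| * r ^ n) * q ^ n := by ring
    _ ≤ C * q ^ n := by
        apply mul_le_mul_of_nonneg_right h1 (by positivity)

private lemma auxSummable1 {c : ℕ → ℝ}
    (hb : ∀ r ∈ Set.Ioo (0:ℝ) 1, Summable fun n => c n * r ^ n)
    {y : ℝ} (hy : |y| < 1) :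
    Summable fun n : ℕ => (((n:ℝ) + 1) * c (n + 1)) * y ^ n := by
  have h0 : 0 ≤ |y| := abs_nonneg y
  set r : ℝ := (|y| + 1) / 2 with hr
  have hr0 : 0 < r := by rw [hr]; linarith
  have hyr : |y| < r := by rw [hr]; linarith
  have hr1 : r < 1 := by rw [hr]; linarith
  obtain ⟨C, hC⟩ := auxBound (hb r ⟨hr0, hr1⟩)
  set q : ℝ := |y| / r with hq
  have hq1 : q < 1 := (div_lt_one hr0).2 hyr
  have hq0 : 0 ≤ q := by positivity
  have hsum : Summable fun n : ℕ => (C / r) * (((n:ℝ) + 1) * q ^ n) := by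
    apply Summable.mul_left
    have h1 := summable_pow_mul_geometric_of_norm_lt_one 1
      (by rwa [Real.norm_eq_abs, abs_of_nonneg hq0] : ‖q‖ < 1)
    have h2 := summable_geometric_of_lt_one hq0 hq1
    exact (h1.add h2).congr (fun n => by push_cast; ring)
  refine Summable.of_norm_bounded hsum (fun n => ?_)
  have h1 : |c (n+1)| * r ^ (n+1) ≤ C := by
    have := hC (n+1); rwa [abs_of_pos hr0] at this
  have key : |c (n+1)| * r ^ n ≤ C / r := by
    rw [le_div_iff₀ hr0]
    calc |c (n+1)| * r ^ n * r = |c (n+1)| * r ^ (n+1) := by ring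
      _ ≤ C := h1
  have hyq : |y| ^ n = q ^ n * r ^ n := by
    rw [hq, div_pow]; field_simp
  rw [Real.norm_eq_abs, abs_mul, abs_mul, abs_pow, hyq,
    abs_of_nonneg (by positivity : (0:ℝ) ≤ (n:ℝ) + 1)]
  calc ((n:ℝ)+1) * |c (n+1)| * (q ^ n * r ^ n)
      = ((n:ℝ)+1) * ((|c (n+1)| * r ^ n) * q ^ n) := by ring
    _ ≤ ((n:ℝ)+1) * ((C / r) * q ^ n) := by
        apply mul_le_mul_of_nonneg_left _ (by positivity)
        apply mul_le_mul_of_nonneg_right key (by positivity)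
    _ = C / r * (((n:ℝ)+1) * q ^ n) := by ring
private lemma auxDeriv {c : ℕ → ℝ}
    (hb : ∀ r ∈ Set.Ioo (0:ℝ) 1, Summable fun n => c n * r ^ n)
    {y : ℝ} (hy : |y| < 1) :
    HasDerivAt (fun t : ℝ => ∑' n : ℕ, c n * t ^ n)
      (∑' n : ℕ, (((n:ℝ) + 1) * c (n + 1)) * y ^ n) y := by
  have h0 : 0 ≤ |y| := abs_nonneg y
  set r : ℝ := (|y| + 1) / 2 with hr
  have hr0 : 0 < r := by rw [hr]; linarith
  have hyr : |y| < r := by rw [hr]; linarith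
  have hr1 : r < 1 := by rw [hr]; linarith
  -- the bounding sequence
  have hu : Summable (fun n : ℕ => |c n| * ((n:ℝ) * r ^ (n - 1))) := by
    rw [← summable_nat_add_iff 1]
    refine Summable.congr ?_ (fun n : ℕ =>
      show (((n:ℝ) + 1) * |c (n+1)|) * r ^ n = |c (n+1)| * ((↑(n+1):ℝ) * r ^ (n + 1 - 1)) by
        push_cast [Nat.add_sub_cancel]; ring)
    have habs : ∀ q ∈ Set.Ioo (0:ℝ) 1, Summable fun n => |c n| * q ^ n := by
      intro q hq
      refine (hb q hq).abs.congr (fun n => ?_)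
      rw [abs_mul, abs_pow, abs_of_pos hq.1]
    exact auxSummable1 habs (by rwa [abs_of_pos hr0])
  have key := hasDerivAt_tsum_of_isPreconnected hu (Metric.isOpen_ball)
    (convex_ball (0:ℝ) r).isPreconnected
    (g := fun (n : ℕ) (t : ℝ) => c n * t ^ n)
    (g' := fun (n : ℕ) (t : ℝ) => c n * ((n:ℝ) * t ^ (n - 1)))
    (fun n t _ => (hasDerivAt_pow n t).const_mul (c n))
    (fun n t ht => ?_) (y₀ := y) (y := y) ?_ ?_ ?_
  · -- convert the sum of derivatives
    refine key.congr_deriv (Eq.symm ?_)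
    have hs : Summable (fun n : ℕ => c n * ((n:ℝ) * y ^ (n - 1))) := by
      rw [← summable_nat_add_iff 1]
      refine (auxSummable1 hb hy).congr (fun n : ℕ =>
        show (((n:ℝ) + 1) * c (n+1)) * y ^ n = c (n+1) * ((↑(n+1):ℝ) * y ^ (n + 1 - 1)) by
          push_cast [Nat.add_sub_cancel]; ring)
    rw [Summable.tsum_eq_zero_add hs]
    simp only [Nat.cast_zero, zero_mul, mul_zero, zero_add]
    refine tsum_congr (fun n : ℕ => ?_)
    show (((n:ℝ) + 1) * c (n+1)) * y ^ n = c (n+1) * ((↑(n+1):ℝ) * y ^ (n + 1 - 1))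
    push_cast [Nat.add_sub_cancel]; ring
  · -- bound
    rw [Real.norm_eq_abs, abs_mul, abs_mul, abs_pow, Nat.abs_cast]
    rcases Nat.eq_zero_or_pos n with h | h
    · simp [h]
    apply mul_le_mul_of_nonneg_left _ (abs_nonneg _)
    apply mul_le_mul_of_nonneg_left _ (Nat.cast_nonneg n)
    apply pow_le_pow_left₀ (abs_nonneg t)
    have := mem_ball_iff_norm.mp ht
    simp only [sub_zero, Real.norm_eq_abs] at this
    linarith
  · exact Metric.mem_ball.mpr (by simpa [Real.dist_eq] using hyr)
  · exact auxSummable0 hb hy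
  · exact Metric.mem_ball.mpr (by simpa [Real.dist_eq] using hyr)

private lemma auxShiftSummable {c : ℕ → ℝ} {y : ℝ}
    (h : Summable fun n => c n * y ^ n) (k : ℕ) :
    Summable fun n : ℕ => (if k ≤ n then c (n - k) else 0) * y ^ n := by
  rw [← summable_nat_add_iff k]
  refine ((h.mul_right (y ^ k)).congr (fun n => ?_))
  simp only [le_add_iff_nonneg_left, zero_le, if_pos, Nat.add_sub_cancel]
  ring

private lemma auxShift {c : ℕ → ℝ} {y : ℝ}
    (h : Summable fun n => c n * y ^ n) (k : ℕ) :
    y ^ k * ∑' n : ℕ, c n * y ^ n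
      = ∑' n : ℕ, (if k ≤ n then c (n - k) else 0) * y ^ n := by
  have hs := auxShiftSummable h k
  rw [← Summable.sum_add_tsum_nat_add k hs]
  have h1 : ∑ i ∈ Finset.range k, (if k ≤ i then c (i - k) else 0) * y ^ i = 0 := by
    apply Finset.sum_eq_zero
    intro i hi
    rw [if_neg (Nat.not_le.mpr (Finset.mem_range.mp hi)), zero_mul]
  rw [h1, zero_add, ← tsum_mul_left]
  refine tsum_congr (fun n => ?_)
  rw [if_pos (by omega : k ≤ n + k), Nat.add_sub_cancel, pow_add]
  ring

set_option maxHeartbeats 1000000 in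
/-- If the coefficients `a_n` satisfy Fearnhead's recursion, then
`ψ(x) = x·∑_{n≥1} a_n (1-x)^n` satisfies Taylor's second-order ODE on `(0,1)`
(the power series in `(1-x)` converges on `(0,1)` by assumption, so all formal
manipulations are justified). -/
theorem stmt18 (θ σ ν0 ν1 : ℝ) (hθ : 0 < θ) (hσ : 0 ≤ σ)
    (hν0 : ν0 ∈ Set.Ioo (0:ℝ) 1) (hν1 : ν1 ∈ Set.Ioo (0:ℝ) 1) (hνsum : ν0 + ν1 = 1)
    (a : ℕ → ℝ) (ha0 : a 0 = 0)
    (hrec2 : (2 + θ * ν1) * a 2 - (2 + σ + θ) * a 1 + σ = 0)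
    (hrecn : ∀ n : ℕ, 3 ≤ n →
      ((n:ℝ) + θ * ν1) * a n - ((n:ℝ) + σ + θ) * a (n-1) + σ * a (n-2) = 0)
    (hconv : ∀ x ∈ Set.Ioo (0:ℝ) 1, Summable (fun n : ℕ => a n * (1-x)^n))
    (ψ : ℝ → ℝ) (hψ : ∀ x, ψ x = x * ∑' n : ℕ, a n * (1-x)^n) :
    ∀ x ∈ Set.Ioo (0:ℝ) 1,
      x * (1-x) * iteratedDeriv 2 ψ x
        + ((1-x) * θ * ν0 - x * θ * ν1 + (1-x) * x * σ) * deriv ψ x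
        - (θ * ν1 * x / (1-x) + θ * ν0 * (1-x) / x) * ψ x
        + σ * x * (1-x) = 0 := by
  have hν0eq : ν0 = 1 - ν1 := by linarith
  subst hν0eq
  intro x hx
  obtain ⟨hx0, hx1⟩ := hx
  have hY0 : (1:ℝ) - x ≠ 0 := by intro h; nlinarith
  have hxy : |1 - x| < 1 := by rw [abs_of_pos (by linarith)]; linarith
  have hyIoo : (1:ℝ) - x ∈ Set.Ioo (0:ℝ) 1 := ⟨by linarith, by linarith⟩
  -- base summability as a power series in y
  have hb : ∀ r ∈ Set.Ioo (0:ℝ) 1, Summable fun n => a n * r ^ n := by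
    intro r hr
    have := hconv (1 - r) ⟨by linarith [hr.2], by linarith [hr.1]⟩
    simpa using this
  have hbP : ∀ r ∈ Set.Ioo (0:ℝ) 1,
      Summable fun n : ℕ => (((n:ℝ)+1) * a (n+1)) * r ^ n := by
    intro r hr
    exact auxSummable1 hb (by rw [abs_of_pos hr.1]; exact hr.2)
  -- coefficient families
  set c1 : ℕ → ℝ := fun n => a (n+1) with hc1
  set c2 : ℕ → ℝ := fun n => ((n:ℝ)+1) * a (n+1) with hc2
  set c3 : ℕ → ℝ := fun n => ((n:ℝ)+2) * ((n:ℝ)+1) * a (n+2) with hc3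
  -- derivative of ψ on Ioo 0 2
  have hψd : ∀ t ∈ Set.Ioo (0:ℝ) 2,
      HasDerivAt ψ ((∑' n : ℕ, a n * (1-t)^n)
        - t * ∑' n : ℕ, c2 n * (1-t)^n) t := by
    intro t ht
    have h1t : |1 - t| < 1 := by
      rw [abs_lt]; constructor
      · linarith [ht.2]
      · linarith [ht.1]
    have hin : HasDerivAt (fun s : ℝ => 1 - s) (-1) t := by
      exact (hasDerivAt_id t).const_sub 1
    have hVd : HasDerivAt (fun s : ℝ => ∑' n : ℕ, a n * (1-s)^n)
        (-(∑' n : ℕ, c2 n * (1-t)^n)) t := by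
      have hout := auxDeriv hb h1t
      have := hout.comp t hin
      simp only [Function.comp_def] at this
      refine this.congr_deriv (Eq.symm ?_)
      simp only [hc2]
      ring
    have hmul : HasDerivAt (fun s : ℝ => s * ∑' n : ℕ, a n * (1-s)^n)
        (1 * (∑' n : ℕ, a n * (1-t)^n)
          + t * -(∑' n : ℕ, c2 n * (1-t)^n)) t :=
      (hasDerivAt_id t).mul hVd
    have hfun : ψ = fun s : ℝ => s * ∑' n : ℕ, a n * (1-s)^n :=
      funext fun s => hψ s
    rw [hfun]
    convert hmul using 1
    ring
  have hx2 : x ∈ Set.Ioo (0:ℝ) 2 := ⟨hx0, by linarith⟩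
  have hderivx : deriv ψ x = (∑' n : ℕ, a n * (1-x)^n)
      - x * ∑' n : ℕ, c2 n * (1-x)^n := (hψd x hx2).deriv
  -- second derivative
  set hv := ∑' n : ℕ, c1 n * (1-x)^n with hhv
  set Pv := ∑' n : ℕ, c2 n * (1-x)^n with hPv
  set Qv := ∑' n : ℕ, c3 n * (1-x)^n with hQv
  have hF : HasDerivAt (fun t : ℝ => (∑' n : ℕ, a n * (1-t)^n)
      - t * ∑' n : ℕ, c2 n * (1-t)^n) (x * Qv - 2 * Pv) x := by
    have hin : HasDerivAt (fun s : ℝ => 1 - s) (-1) x := by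
      exact (hasDerivAt_id x).const_sub 1
    have hA : HasDerivAt (fun s : ℝ => ∑' n : ℕ, a n * (1-s)^n) (-Pv) x := by
      have hout := auxDeriv hb hxy
      have := hout.comp x hin
      simp only [Function.comp_def] at this
      refine this.congr_deriv (Eq.symm ?_)
      simp only [hPv, hc2]
      ring
    have hB : HasDerivAt (fun s : ℝ => ∑' n : ℕ, c2 n * (1-s)^n) (-Qv) x := by
      have hout := auxDeriv hbP hxy
      have hcomp := hout.comp x hin
      simp only [Function.comp_def] at hcomp
      have hcomp' : HasDerivAt (fun s : ℝ => ∑' n : ℕ, c2 n * (1-s)^n)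
          ((∑' n : ℕ, (((n:ℝ) + 1) * c2 (n + 1)) * (1 - x) ^ n) * -1) x := hcomp
      have hval : (∑' n : ℕ, (((n:ℝ) + 1) * c2 (n + 1)) * (1 - x) ^ n) = Qv := by
        rw [hQv]
        refine tsum_congr (fun n => ?_)
        simp only [hc2, hc3]
        push_cast
        ring
      rw [hval] at hcomp'
      convert hcomp' using 1
      ring
    have hmul : HasDerivAt (fun s : ℝ => s * ∑' n : ℕ, c2 n * (1-s)^n)
        (1 * Pv + x * -Qv) x := by
      exact (hasDerivAt_id x).mul hB
    have := hA.sub hmul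
    refine this.congr_deriv (Eq.symm ?_)
    ring
  have h2d : iteratedDeriv 2 ψ x = x * Qv - 2 * Pv := by
    have hEq : deriv ψ =ᶠ[nhds x] (fun t : ℝ => (∑' n : ℕ, a n * (1-t)^n)
        - t * ∑' n : ℕ, c2 n * (1-t)^n) :=
      Filter.eventuallyEq_of_mem (Ioo_mem_nhds hx2.1 hx2.2)
        (fun t ht => (hψd t ht).deriv)
    rw [iteratedDeriv_succ, iteratedDeriv_one, hEq.deriv_eq, hF.deriv]
  -- summability of the three families at y = 1 - x
  have S0 : Summable fun n : ℕ => a n * (1-x)^n := auxSummable0 hb hxy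
  have S1 : Summable fun n : ℕ => c1 n * (1-x)^n := by
    have t1 : Summable fun n : ℕ => a (n+1) * (1-x)^(n+1) :=
      (summable_nat_add_iff 1).mpr S0
    refine ((t1.mul_left ((1-x)⁻¹)).congr (fun n => ?_))
    simp only [hc1]
    field_simp
    ring
  have S2 : Summable fun n : ℕ => c2 n * (1-x)^n := hbP (1-x) hyIoo
  have S3 : Summable fun n : ℕ => c3 n * (1-x)^n := by
    refine ((auxSummable1 hbP hxy).congr (fun n => ?_))
    simp only [hc2, hc3]
    push_cast
    ring
  -- v(x) = (1-x) * hv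
  have hVy : (∑' n : ℕ, a n * (1-x)^n) = (1-x) * hv := by
    rw [Summable.tsum_eq_zero_add S0, ha0, zero_mul, zero_add, hhv, ← tsum_mul_left]
    refine tsum_congr (fun n => ?_)
    simp only [hc1]
    ring
  -- HasSum facts for shifted series
  have H1 : HasSum (fun n : ℕ => c1 n * (1-x)^n) hv := S1.hasSum
  have H2 : HasSum (fun n : ℕ => c2 n * (1-x)^n) Pv := S2.hasSum
  have H1s : ∀ k : ℕ, HasSum (fun n : ℕ => (if k ≤ n then c1 (n-k) else 0) * (1-x)^n)
      ((1-x)^k * hv) := by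
    intro k
    have := (auxShiftSummable S1 k).hasSum
    rwa [← auxShift S1 k] at this
  have H2s : ∀ k : ℕ, HasSum (fun n : ℕ => (if k ≤ n then c2 (n-k) else 0) * (1-x)^n)
      ((1-x)^k * Pv) := by
    intro k
    have := (auxShiftSummable S2 k).hasSum
    rwa [← auxShift S2 k] at this
  have H3s : ∀ k : ℕ, HasSum (fun n : ℕ => (if k ≤ n then c3 (n-k) else 0) * (1-x)^n)
      ((1-x)^k * Qv) := by
    intro k
    have := (auxShiftSummable S3 k).hasSum
    rwa [← auxShift S3 k] at this
  -- the big combination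
  have Hbig : HasSum (fun n : ℕ =>
      (-(θ*ν1)) * (c1 n * (1-x)^n)
      + (θ*ν1) * ((if 1 ≤ n then c1 (n-1) else 0) * (1-x)^n)
      + σ * ((if 2 ≤ n then c1 (n-2) else 0) * (1-x)^n)
      + (-σ) * ((if 3 ≤ n then c1 (n-3) else 0) * (1-x)^n)
      + (θ*ν1) * (c2 n * (1-x)^n)
      + (-(2+θ+σ+θ*ν1)) * ((if 1 ≤ n then c2 (n-1) else 0) * (1-x)^n)
      + (2+θ+2*σ) * ((if 2 ≤ n then c2 (n-2) else 0) * (1-x)^n)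
      + (-σ) * ((if 3 ≤ n then c2 (n-3) else 0) * (1-x)^n)
      + (if 1 ≤ n then c3 (n-1) else 0) * (1-x)^n
      + (-2) * ((if 2 ≤ n then c3 (n-2) else 0) * (1-x)^n)
      + (if 3 ≤ n then c3 (n-3) else 0) * (1-x)^n)
      ((-(θ*ν1)) * hv + (θ*ν1) * ((1-x)^1 * hv) + σ * ((1-x)^2 * hv)
        + (-σ) * ((1-x)^3 * hv)
        + (θ*ν1) * Pv + (-(2+θ+σ+θ*ν1)) * ((1-x)^1 * Pv)
        + (2+θ+2*σ) * ((1-x)^2 * Pv) + (-σ) * ((1-x)^3 * Pv)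
        + (1-x)^1 * Qv + (-2) * ((1-x)^2 * Qv) + (1-x)^3 * Qv) :=
    ((((((((((H1.mul_left (-(θ*ν1))).add ((H1s 1).mul_left (θ*ν1))).add
      ((H1s 2).mul_left σ)).add ((H1s 3).mul_left (-σ))).add
      (H2.mul_left (θ*ν1))).add ((H2s 1).mul_left (-(2+θ+σ+θ*ν1)))).add
      ((H2s 2).mul_left (2+θ+2*σ))).add ((H2s 3).mul_left (-σ))).add
      (H3s 1)).add ((H3s 2).mul_left (-2))).add (H3s 3)
  -- the terms vanish except n = 1, 2
  have hZero : ∀ n : ℕ, n ∉ ({1, 2} : Finset ℕ) →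
      (-(θ*ν1)) * (c1 n * (1-x)^n)
      + (θ*ν1) * ((if 1 ≤ n then c1 (n-1) else 0) * (1-x)^n)
      + σ * ((if 2 ≤ n then c1 (n-2) else 0) * (1-x)^n)
      + (-σ) * ((if 3 ≤ n then c1 (n-3) else 0) * (1-x)^n)
      + (θ*ν1) * (c2 n * (1-x)^n)
      + (-(2+θ+σ+θ*ν1)) * ((if 1 ≤ n then c2 (n-1) else 0) * (1-x)^n)
      + (2+θ+2*σ) * ((if 2 ≤ n then c2 (n-2) else 0) * (1-x)^n)
      + (-σ) * ((if 3 ≤ n then c2 (n-3) else 0) * (1-x)^n)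
      + (if 1 ≤ n then c3 (n-1) else 0) * (1-x)^n
      + (-2) * ((if 2 ≤ n then c3 (n-2) else 0) * (1-x)^n)
      + (if 3 ≤ n then c3 (n-3) else 0) * (1-x)^n = 0 := by
    intro n hn
    match n with
    | 0 =>
      simp only [hc1, hc2, hc3]
      norm_num
    | 1 => simp at hn
    | 2 => simp at hn
    | (m+3) =>
      have i1 : 1 ≤ m+3 := by omega
      have i2 : 2 ≤ m+3 := by omega
      have i3 : 3 ≤ m+3 := by omega
      have e1 : m+3-1 = m+2 := by omega
      have e2 : m+3-2 = m+1 := by omega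
      have e3 : m+3-3 = m := by omega
      have h3 := hrecn (m+3) (by omega)
      have h4 := hrecn (m+4) (by omega)
      rw [show m+3-1 = m+2 from by omega, show m+3-2 = m+1 from by omega] at h3
      rw [show m+4-1 = m+3 from by omega, show m+4-2 = m+2 from by omega] at h4
      push_cast at h3 h4
      simp only [if_pos i1, if_pos i2, if_pos i3, e1, e2, e3, hc1, hc2, hc3]
      push_cast
      linear_combination (((m:ℝ)+3) * h4 - ((m:ℝ)+2) * h3) * (1-x)^(m+3)
  -- evaluate the big sum
  have key : (-(θ*ν1)) * hv + (θ*ν1) * ((1-x)^1 * hv) + σ * ((1-x)^2 * hv)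
        + (-σ) * ((1-x)^3 * hv)
        + (θ*ν1) * Pv + (-(2+θ+σ+θ*ν1)) * ((1-x)^1 * Pv)
        + (2+θ+2*σ) * ((1-x)^2 * Pv) + (-σ) * ((1-x)^3 * Pv)
        + (1-x)^1 * Qv + (-2) * ((1-x)^2 * Qv) + (1-x)^3 * Qv
      = -σ * (1-x) + σ * (1-x)^2 := by
    rw [← Hbig.tsum_eq, tsum_eq_sum (s := ({1, 2} : Finset ℕ)) hZero]
    rw [show ({1, 2} : Finset ℕ) = insert 1 {2} from rfl,
      Finset.sum_insert (by norm_num), Finset.sum_singleton]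
    have h3 := hrecn 3 (by norm_num)
    norm_num at h3
    simp only [hc1, hc2, hc3]
    norm_num
    linear_combination ((1-x) - (1-x)^2) * hrec2 + 2*(1-x)^2 * h3
  -- finish
  rw [h2d, hderivx, hψ x, hVy]
  have hdiv : (θ * ν1 * x / (1 - x) + θ * (1 - ν1) * (1 - x) / x) * (x * ((1 - x) * hv))
      = θ * ν1 * x^2 * hv + θ * (1 - ν1) * (1-x)^2 * hv := by
    field_simp
  rw [hdiv]
  linear_combination key
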